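/- Under the greedy minimum-budget allocation to three counters (each step's budget b_t added to a counter with smallest current total), for every k ∈ {0, …, T}, the minimum counter value after step T − k is at least (S − (2 + k)·max_t b_t)/3, where S = ∑_{t=1}^T b_t. -/

import Mathlib

/-- Full equipartition inequality (eq:equipartition): for every `k ∈ {0,…,T}`, the minimum
counter value after step `T - k` is at least `(S - (2 + k)·max_t b_t)/3`. -/
theorem stmt13 (T : ℕ) (hT : 1 ≤ T) (b : ℕ → ℝ) (hb : ∀ s, 1 ≤ s → s ≤ T → 0 < b s)
    (X : ℕ → Fin 3) (B : Fin 3 → ℕ → ℝ)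
    (hB : ∀ j t, B j t = ∑ s ∈ Finset.Icc 1 t, if X s = j then b s else 0)
    (hgreedy : ∀ t, 1 ≤ t → t ≤ T → ∀ j, B (X t) (t - 1) ≤ B j (t - 1))
    (k : ℕ) (hk : k ≤ T) (j : Fin 3) :
    ((∑ s ∈ Finset.Icc 1 T, b s)
        - (2 + (k : ℝ)) * (Finset.Icc 1 T).sup' (Finset.nonempty_Icc.2 hT) b) / 3
      ≤ B j (T - k) := by
  set M : ℝ := (Finset.Icc 1 T).sup' (Finset.nonempty_Icc.2 hT) b with hM
  have hbM : ∀ s, 1 ≤ s → s ≤ T → b s ≤ M := by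
    intro s h1 h2
    exact Finset.le_sup' b (Finset.mem_Icc.2 ⟨h1, h2⟩)
  have hstep : ∀ j t, B j (t + 1) = B j t + (if X (t+1) = j then b (t+1) else 0) := by
    intro j t
    rw [hB, hB, Finset.sum_Icc_succ_top (by omega : 1 ≤ t + 1)]
  have hnonneg : ∀ j t, t + 1 ≤ T → 0 ≤ (if X (t+1) = j then b (t+1) else 0) := by
    intro j t ht
    split
    · exact (hb (t+1) (by omega) ht).le
    · rfl
  -- invariant: differences bounded by M
  have hinv : ∀ t, t ≤ T → ∀ j j' : Fin 3, B j t ≤ B j' t + M := by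
    intro t
    induction t with
    | zero =>
      intro _ j j'
      have h0 : ∀ i : Fin 3, B i 0 = 0 := by
        intro i; rw [hB]; simp
      rw [h0, h0]
      have : 0 < M := lt_of_lt_of_le (hb 1 le_rfl hT) (hbM 1 le_rfl hT)
      linarith
    | succ t ih =>
      intro ht j j'
      have ih' := ih (by omega)
      have hle : B j' t ≤ B j' (t+1) := by
        rw [hstep]; linarith [hnonneg j' t ht]
      by_cases hx : X (t+1) = j
      · have hg := hgreedy (t+1) (by omega) ht j'
        simp only [Nat.add_sub_cancel] at hg
        rw [hx] at hg
        have : B j (t+1) = B j t + b (t+1) := by rw [hstep]; simp [hx]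
        rw [this]
        have := hbM (t+1) (by omega) ht
        linarith
      · have : B j (t+1) = B j t := by rw [hstep]; simp [hx]
        rw [this]
        linarith [ih' j j']
  -- sum of counters equals partial sum
  have hsum : ∀ t, (∑ i : Fin 3, B i t) = ∑ s ∈ Finset.Icc 1 t, b s := by
    intro t
    simp only [hB]
    rw [Finset.sum_comm]
    apply Finset.sum_congr rfl
    intro s _
    rw [Finset.sum_ite_eq Finset.univ (X s) (fun _ => b s)]
    simp
  -- pointwise lower bound at time t
  have hlow : ∀ t, t ≤ T → (∑ s ∈ Finset.Icc 1 t, b s) - 2 * M ≤ 3 * B j t := by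
    intro t ht
    have h1 : (∑ i : Fin 3, B i t) ≤ 3 * B j t + 2 * M := by
      have e : (∑ i : Fin 3, B i t) = B 0 t + B 1 t + B 2 t := by
        simp [Fin.sum_univ_three]
      rw [e]
      have h0 := hinv t ht 0 j
      have h1 := hinv t ht 1 j
      have h2 := hinv t ht 2 j
      have hj3 : j = 0 ∨ j = 1 ∨ j = 2 := by fin_cases j <;> simp
      rcases hj3 with rfl | rfl | rfl <;> linarith
    rw [hsum] at h1
    linarith
  -- tail bound
  have htail : (∑ s ∈ Finset.Icc 1 T, b s) ≤ (∑ s ∈ Finset.Icc 1 (T - k), b s) + k * M := by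
    have hsplit : (∑ s ∈ Finset.Ioc 0 (T - k), b s) + (∑ s ∈ Finset.Ioc (T - k) T, b s)
        = ∑ s ∈ Finset.Ioc 0 T, b s :=
      Finset.sum_Ioc_consecutive b (Nat.zero_le _) (by omega)
    rw [show Finset.Icc 1 T = Finset.Ioc 0 T from Finset.Icc_add_one_left_eq_Ioc 0 T,
        show Finset.Icc 1 (T - k) = Finset.Ioc 0 (T - k) from Finset.Icc_add_one_left_eq_Ioc 0 (T - k),
        ← hsplit]
    have hcard : (Finset.Ioc (T - k) T).card = k := by
      rw [Nat.card_Ioc]; omega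
    have := Finset.sum_le_card_nsmul (Finset.Ioc (T - k) T) b M (by
      intro x hx
      simp only [Finset.mem_Ioc] at hx
      exact hbM x (by omega) hx.2)
    rw [hcard] at this
    have : (∑ s ∈ Finset.Ioc (T - k) T, b s) ≤ (k : ℝ) * M := by
      simpa [nsmul_eq_mul] using this
    linarith
  have hmain := hlow (T - k) (by omega)
  have : (∑ s ∈ Finset.Icc 1 T, b s) - (2 + (k:ℝ)) * M ≤ 3 * B j (T - k) := by
    have : (∑ s ∈ Finset.Icc 1 T, b s) - (2 + (k:ℝ)) * M
        ≤ (∑ s ∈ Finset.Icc 1 (T - k), b s) - 2 * M := by ring_nf; linarith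
    linarith
  linarith
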